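/- Let N = N_A + N_B with 0 < N_A < N, identify C^{2^N} = C^{2^{N_A}} ⊗ C^{2^{N_B}}, and let |b⟩ be a fixed standard (computational) basis vector of C^{2^{N_B}}. Let Π^{(2)} = (I + SWAP)/2 on C^{2^N} ⊗ C^{2^N} and let ρ_f = (1/2)[(Z_0⊗Z_0)Π^{(2)}/Tr((Z_0⊗Z_0)Π^{(2)}) + (Z_1⊗Z_1)Π^{(2)}/Tr((Z_1⊗Z_1)Π^{(2)})], where Z_0 = (I+S)/2, Z_1 = (I−S)/2, S = σ_z^{⊗N}. Then the partial inner products satisfy: Tr(⟨b|⊗⟨b| Π^{(2)} |b⟩⊗|b⟩) / Tr(Π^{(2)}) = 2^{N_A}(2^{N_A}+1) / (2^N(2^N+1)), and Tr(⟨b|⊗⟨b| ρ_f |b⟩⊗|b⟩) = 2^{N_A}(2^{N_A}+2) / (2^N(2^N+2)). Here ⟨b|⊗⟨b| M |b⟩⊗|b⟩ denotes the operator on (C^{2^{N_A}})^{⊗2} obtained by contracting M on both B-factors with |b⟩. -/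
import Mathlib


open Matrix
open scoped Kronecker

noncomputable section

namespace Z2aux

def eps {N : ℕ} (x : Fin N → Fin 2) : ℂ := ∏ i, (-1 : ℂ) ^ (x i : ℕ)

lemma eps_sq {N : ℕ} (x : Fin N → Fin 2) : eps x * eps x = 1 := by
  unfold eps
  rw [← Finset.prod_mul_distrib]
  apply Finset.prod_eq_one
  intro i _
  rw [← mul_pow]
  norm_num

lemma sum_eps {N : ℕ} (hN : 0 < N) : ∑ x : Fin N → Fin 2, eps x = 0 := by
  unfold eps
  rw [← Fintype.prod_sum (fun (_ : Fin N) (j : Fin 2) => (-1 : ℂ) ^ (j : ℕ))]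
  have h2 : ∑ j : Fin 2, (-1 : ℂ) ^ (j : ℕ) = 0 := by
    simp [Fin.sum_univ_succ]
  simp only [h2, Finset.prod_const]
  simp [zero_pow hN.ne']

lemma card_q (N : ℕ) : (Fintype.card (Fin N → Fin 2)) = 2 ^ N := by simp

/-- generic quadratic sum used for both traces -/
lemma quad_sum {α : Type*} [Fintype α] [DecidableEq α] (f : α → ℂ)
    (hf : ∀ x, f x * f x = f x) (S : ℂ) (hS : ∑ x, f x = S) :
    ∑ x : α × α, f x.1 * f x.2 * ((2 : ℂ)⁻¹ * (1 + if x.1 = x.2 then 1 else 0))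
      = 2⁻¹ * (S * S + S) := by
  rw [Fintype.sum_prod_type]
  have e1 : ∀ a : α, ∑ c : α, f a * f c * ((2 : ℂ)⁻¹ * (1 + if a = c then 1 else 0))
      = 2⁻¹ * (f a * S) + 2⁻¹ * f a := by
    intro a
    have step : ∀ c : α, f a * f c * ((2 : ℂ)⁻¹ * (1 + if a = c then 1 else 0))
        = 2⁻¹ * (f a * f c) + 2⁻¹ * (if c = a then f a * f c else 0) := by
      intro c
      rcases eq_or_ne a c with h | h
      · subst h; rw [if_pos rfl, if_pos rfl]; ring
      · simp only [if_neg h, if_neg (Ne.symm h)]; ring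
    rw [Finset.sum_congr rfl fun c _ => step c, Finset.sum_add_distrib,
      ← Finset.mul_sum, ← Finset.mul_sum, ← Finset.mul_sum, hS,
      Finset.sum_ite_eq' Finset.univ a fun c => f a * f c]
    simp [hf a]
  rw [Finset.sum_congr rfl fun a _ => e1 a, Finset.sum_add_distrib,
    ← Finset.mul_sum, ← Finset.mul_sum, ← Finset.sum_mul, hS]
  ring

end Z2aux

/-- Index type of the `N`-qubit Hilbert space `ℂ^(2^N)`. -/
abbrev QIdx (N : ℕ) := Fin N → Fin 2

/-- `σ_z^{⊗N}`. -/
def Smat (N : ℕ) : Matrix (QIdx N) (QIdx N) ℂ :=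
  Matrix.diagonal fun x => ∏ i, (-1 : ℂ) ^ (x i : ℕ)

/-- Bipartite index: `ℂ^{2^N} = ℂ^{2^{N_A}} ⊗ ℂ^{2^{N_B}}`. -/
abbrev PIdx (NA NB : ℕ) := QIdx NA × QIdx NB

/-- `σ_z^{⊗N} = σ_z^{⊗N_A} ⊗ σ_z^{⊗N_B}` on the bipartite Hilbert space. -/
def SmatAB (NA NB : ℕ) : Matrix (PIdx NA NB) (PIdx NA NB) ℂ :=
  Smat NA ⊗ₖ Smat NB

/-- `Z_0 = (I + S)/2` and `Z_1 = (I - S)/2` on the bipartite space. -/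
def ZprojAB (NA NB : ℕ) (s : Fin 2) : Matrix (PIdx NA NB) (PIdx NA NB) ℂ :=
  (2 : ℂ)⁻¹ • (1 + (-1 : ℂ) ^ (s : ℕ) • SmatAB NA NB)

/-- The flip (SWAP) operator on `ℂ^d ⊗ ℂ^d`. -/
def swapMat (ι : Type*) [DecidableEq ι] : Matrix (ι × ι) (ι × ι) ℂ :=
  fun p q => if p.1 = q.2 ∧ p.2 = q.1 then 1 else 0

/-- `Π^{(2)} = (I + SWAP)/2` on two copies of the bipartite space. -/
def Pi2AB (NA NB : ℕ) : Matrix (PIdx NA NB × PIdx NA NB) (PIdx NA NB × PIdx NA NB) ℂ :=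
  (2 : ℂ)⁻¹ • (1 + swapMat (PIdx NA NB))

/-- `ρ_f`, the second moment of the uniform ensemble of `Z2`-free pure states. -/
def rhoFAB (NA NB : ℕ) : Matrix (PIdx NA NB × PIdx NA NB) (PIdx NA NB × PIdx NA NB) ℂ :=
  (2 : ℂ)⁻¹ •
    ((Matrix.trace ((ZprojAB NA NB 0 ⊗ₖ ZprojAB NA NB 0) * Pi2AB NA NB))⁻¹ •
        ((ZprojAB NA NB 0 ⊗ₖ ZprojAB NA NB 0) * Pi2AB NA NB) +
     (Matrix.trace ((ZprojAB NA NB 1 ⊗ₖ ZprojAB NA NB 1) * Pi2AB NA NB))⁻¹ •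
        ((ZprojAB NA NB 1 ⊗ₖ ZprojAB NA NB 1) * Pi2AB NA NB))

/-- `⟨b|⊗⟨b| M |b⟩⊗|b⟩`: the operator on `(ℂ^{2^{N_A}})^{⊗2}` obtained by contracting
both `B`-factors of `M` with the computational basis vector `|b⟩`. -/
def contractB {NA NB : ℕ} (b : QIdx NB)
    (M : Matrix (PIdx NA NB × PIdx NA NB) (PIdx NA NB × PIdx NA NB) ℂ) :
    Matrix (QIdx NA × QIdx NA) (QIdx NA × QIdx NA) ℂ :=
  fun p q => M ((p.1, b), (p.2, b)) ((q.1, b), (q.2, b))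


namespace Z2aux

def zf (NA NB : ℕ) (s : Fin 2) (p : PIdx NA NB) : ℂ :=
  (2 : ℂ)⁻¹ * (1 + (-1 : ℂ) ^ (s : ℕ) * (eps p.1 * eps p.2))

lemma Zproj_eq (NA NB : ℕ) (s : Fin 2) :
    ZprojAB NA NB s = Matrix.diagonal (zf NA NB s) := by
  unfold ZprojAB SmatAB Smat
  rw [Matrix.diagonal_kronecker_diagonal]
  ext p q
  rcases eq_or_ne p q with h | h
  · subst h
    simp [zf, eps, Matrix.one_apply, Matrix.diagonal_apply_eq, Matrix.add_apply,
      Matrix.smul_apply, smul_eq_mul]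
  · simp [zf, Matrix.one_apply_ne h, Matrix.diagonal_apply_ne _ h, Matrix.add_apply,
      Matrix.smul_apply, smul_eq_mul]

lemma zf_sq (NA NB : ℕ) (s : Fin 2) (p : PIdx NA NB) :
    zf NA NB s p * zf NA NB s p = zf NA NB s p := by
  have h1 := eps_sq p.1
  have h2 := eps_sq p.2
  have hs : (-1 : ℂ) ^ (s : ℕ) * (-1) ^ (s : ℕ) = 1 := by rw [← mul_pow]; norm_num
  have ht : ((-1 : ℂ) ^ (s : ℕ) * (eps p.1 * eps p.2)) *
      ((-1 : ℂ) ^ (s : ℕ) * (eps p.1 * eps p.2)) = 1 := by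
    linear_combination (eps p.1 * eps p.1 * eps p.2 * eps p.2) * hs +
      (eps p.2 * eps p.2) * h1 + h2
  unfold zf
  linear_combination (4⁻¹ : ℂ) * ht

lemma sum_zf (NA NB : ℕ) (hA : 0 < NA) (s : Fin 2) :
    ∑ p : PIdx NA NB, zf NA NB s p = 2⁻¹ * 2 ^ (NA + NB) := by
  have hsplit : ∀ p : PIdx NA NB, zf NA NB s p =
      2⁻¹ + (2⁻¹ * (-1 : ℂ) ^ (s : ℕ)) * (eps p.1 * eps p.2) := by
    intro p; unfold zf; ring
  rw [Finset.sum_congr rfl fun p _ => hsplit p, Finset.sum_add_distrib,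
    ← Finset.mul_sum, Finset.sum_const, Finset.card_univ]
  have h0 : ∑ p : PIdx NA NB, eps p.1 * eps p.2 = 0 := by
    rw [Fintype.sum_prod_type, ← Finset.sum_mul_sum, sum_eps hA, zero_mul]
  rw [h0, mul_zero, add_zero]
  have : Fintype.card (PIdx NA NB) = 2 ^ NA * 2 ^ NB := by simp
  rw [this]
  ring

lemma sum_zf_fix (NA NB : ℕ) (hA : 0 < NA) (s : Fin 2) (b : QIdx NB) :
    ∑ a : QIdx NA, zf NA NB s (a, b) = 2⁻¹ * 2 ^ NA := by
  have hsplit : ∀ a : QIdx NA, zf NA NB s (a, b) =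
      2⁻¹ + (2⁻¹ * (-1 : ℂ) ^ (s : ℕ) * eps b) * eps a := by
    intro a; unfold zf; ring
  rw [Finset.sum_congr rfl fun a _ => hsplit a, Finset.sum_add_distrib,
    ← Finset.mul_sum, sum_eps hA, mul_zero, add_zero, Finset.sum_const,
    Finset.card_univ, card_q]
  ring

lemma Pi2_diag (NA NB : ℕ) (q : PIdx NA NB × PIdx NA NB) :
    Pi2AB NA NB q q = (2 : ℂ)⁻¹ * (1 + if q.1 = q.2 then 1 else 0) := by
  have hsw : swapMat (PIdx NA NB) q q = if q.1 = q.2 then 1 else 0 := by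
    unfold swapMat
    rcases eq_or_ne q.1 q.2 with h | h
    · rw [if_pos ⟨h, h.symm⟩, if_pos h]
    · rw [if_neg (fun hc => h hc.1), if_neg h]
  simp [Pi2AB, Matrix.add_apply, Matrix.smul_apply, smul_eq_mul, Matrix.one_apply, hsw]

lemma trace_Pi2 (NA NB : ℕ) :
    Matrix.trace (Pi2AB NA NB) =
      2⁻¹ * ((2 : ℂ) ^ (NA + NB) * 2 ^ (NA + NB) + 2 ^ (NA + NB)) := by
  have h1 : ∀ q : PIdx NA NB × PIdx NA NB, Pi2AB NA NB q q =
      (fun _ : PIdx NA NB => (1 : ℂ)) q.1 * (fun _ : PIdx NA NB => (1 : ℂ)) q.2 *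
        ((2 : ℂ)⁻¹ * (1 + if q.1 = q.2 then 1 else 0)) := by
    intro q; rw [Pi2_diag]; ring
  rw [Matrix.trace]
  unfold Matrix.diag
  rw [Finset.sum_congr rfl fun q _ => h1 q,
    quad_sum (fun _ : PIdx NA NB => (1 : ℂ)) (fun _ => by norm_num) ((2 : ℂ) ^ (NA + NB))
      (by
        rw [Finset.sum_const, Finset.card_univ]
        have : Fintype.card (PIdx NA NB) = 2 ^ NA * 2 ^ NB := by simp
        rw [this]; ring)]

lemma trace_contract_Pi2 (NA NB : ℕ) (b : QIdx NB) :
    Matrix.trace (contractB b (Pi2AB NA NB)) =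
      2⁻¹ * ((2 : ℂ) ^ NA * 2 ^ NA + 2 ^ NA) := by
  have h1 : ∀ p : QIdx NA × QIdx NA, contractB b (Pi2AB NA NB) p p =
      (fun _ : QIdx NA => (1 : ℂ)) p.1 * (fun _ : QIdx NA => (1 : ℂ)) p.2 *
        ((2 : ℂ)⁻¹ * (1 + if p.1 = p.2 then 1 else 0)) := by
    intro p
    unfold contractB
    rw [Pi2_diag]
    simp [Prod.mk.injEq]
  rw [Matrix.trace]
  unfold Matrix.diag
  rw [Finset.sum_congr rfl fun p _ => h1 p,
    quad_sum (fun _ : QIdx NA => (1 : ℂ)) (fun _ => by norm_num) ((2 : ℂ) ^ NA)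
      (by rw [Finset.sum_const, Finset.card_univ, card_q]; ring)]

lemma trace_Ms (NA NB : ℕ) (hA : 0 < NA) (s : Fin 2) :
    Matrix.trace ((ZprojAB NA NB s ⊗ₖ ZprojAB NA NB s) * Pi2AB NA NB) =
      2⁻¹ * ((2⁻¹ * (2 : ℂ) ^ (NA + NB)) * (2⁻¹ * 2 ^ (NA + NB)) + 2⁻¹ * 2 ^ (NA + NB)) := by
  rw [Zproj_eq, Matrix.diagonal_kronecker_diagonal]
  have h1 : ∀ q : PIdx NA NB × PIdx NA NB,
      (Matrix.diagonal (fun q : PIdx NA NB × PIdx NA NB => zf NA NB s q.1 * zf NA NB s q.2) *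
        Pi2AB NA NB) q q =
      zf NA NB s q.1 * zf NA NB s q.2 * ((2 : ℂ)⁻¹ * (1 + if q.1 = q.2 then 1 else 0)) := by
    intro q
    rw [Matrix.diagonal_mul, Pi2_diag]
  rw [Matrix.trace]
  unfold Matrix.diag
  rw [Finset.sum_congr rfl fun q _ => h1 q,
    quad_sum (zf NA NB s) (zf_sq NA NB s) _ (sum_zf NA NB hA s)]

lemma trace_contract_Ms (NA NB : ℕ) (hA : 0 < NA) (s : Fin 2) (b : QIdx NB) :
    Matrix.trace (contractB b ((ZprojAB NA NB s ⊗ₖ ZprojAB NA NB s) * Pi2AB NA NB)) =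
      2⁻¹ * ((2⁻¹ * (2 : ℂ) ^ NA) * (2⁻¹ * 2 ^ NA) + 2⁻¹ * 2 ^ NA) := by
  rw [Zproj_eq, Matrix.diagonal_kronecker_diagonal]
  have h1 : ∀ p : QIdx NA × QIdx NA,
      contractB b (Matrix.diagonal
          (fun q : PIdx NA NB × PIdx NA NB => zf NA NB s q.1 * zf NA NB s q.2) *
        Pi2AB NA NB) p p =
      (fun a : QIdx NA => zf NA NB s (a, b)) p.1 * (fun a : QIdx NA => zf NA NB s (a, b)) p.2 *
        ((2 : ℂ)⁻¹ * (1 + if p.1 = p.2 then 1 else 0)) := by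
    intro p
    unfold contractB
    rw [Matrix.diagonal_mul, Pi2_diag]
    simp [Prod.mk.injEq]
  rw [Matrix.trace]
  unfold Matrix.diag
  rw [Finset.sum_congr rfl fun p _ => h1 p,
    quad_sum (fun a : QIdx NA => zf NA NB s (a, b)) (fun a => zf_sq NA NB s (a, b)) _
      (sum_zf_fix NA NB hA s b)]

lemma trace_contract_rho (NA NB : ℕ) (b : QIdx NB) :
    Matrix.trace (contractB b (rhoFAB NA NB)) =
      2⁻¹ * ((Matrix.trace ((ZprojAB NA NB 0 ⊗ₖ ZprojAB NA NB 0) * Pi2AB NA NB))⁻¹ *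
          Matrix.trace (contractB b ((ZprojAB NA NB 0 ⊗ₖ ZprojAB NA NB 0) * Pi2AB NA NB)) +
        (Matrix.trace ((ZprojAB NA NB 1 ⊗ₖ ZprojAB NA NB 1) * Pi2AB NA NB))⁻¹ *
          Matrix.trace (contractB b ((ZprojAB NA NB 1 ⊗ₖ ZprojAB NA NB 1) * Pi2AB NA NB))) := by
  unfold rhoFAB contractB
  simp only [Matrix.trace, Matrix.diag, Matrix.smul_apply, Matrix.add_apply, smul_eq_mul]
  rw [← Finset.mul_sum, Finset.sum_add_distrib, ← Finset.mul_sum, ← Finset.mul_sum]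

lemma two_pow_ne_zero (n : ℕ) : (2 : ℂ) ^ n ≠ 0 := pow_ne_zero n two_ne_zero

lemma two_pow_add_ne_zero (n : ℕ) (a : ℝ) (ha : 0 < a) : (2 : ℂ) ^ n + (a : ℂ) ≠ 0 := by
  have h1 : ((2 : ℝ) ^ n + a) ≠ 0 := by positivity
  have h2 : (((2 : ℝ) ^ n + a : ℝ) : ℂ) ≠ 0 := Complex.ofReal_ne_zero.mpr h1
  push_cast at h2
  exact h2

end Z2aux

/-- **Statement 7.** The measurement-protocol constants:
`Tr(⟨b|⊗⟨b| Π^{(2)} |b⟩⊗|b⟩)/Tr(Π^{(2)}) = 2^{N_A}(2^{N_A}+1)/(2^N(2^N+1))` (this is `k₁`) and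
`Tr(⟨b|⊗⟨b| ρ_f |b⟩⊗|b⟩) = 2^{N_A}(2^{N_A}+2)/(2^N(2^N+2))` (this is `k₂`). -/
theorem Z2_protocol_constants (NA NB : ℕ) (hA : 0 < NA) (hB : 0 < NB)
    (b : QIdx NB) :
    Matrix.trace (contractB b (Pi2AB NA NB)) / Matrix.trace (Pi2AB NA NB) =
      (2 : ℂ) ^ NA * ((2 : ℂ) ^ NA + 1) / ((2 : ℂ) ^ (NA + NB) * ((2 : ℂ) ^ (NA + NB) + 1)) ∧
    Matrix.trace (contractB b (rhoFAB NA NB)) =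
      (2 : ℂ) ^ NA * ((2 : ℂ) ^ NA + 2) / ((2 : ℂ) ^ (NA + NB) * ((2 : ℂ) ^ (NA + NB) + 2)) := by
  classical
  have hD0 := Z2aux.two_pow_ne_zero (NA + NB)
  have hD1 : (2 : ℂ) ^ (NA + NB) + 1 ≠ 0 := by
    have := Z2aux.two_pow_add_ne_zero (NA + NB) 1 one_pos
    simpa using this
  have hD2 : (2 : ℂ) ^ (NA + NB) + 2 ≠ 0 := by
    have := Z2aux.two_pow_add_ne_zero (NA + NB) 2 two_pos
    simpa using this
  constructor
  · rw [Z2aux.trace_contract_Pi2, Z2aux.trace_Pi2]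
    rw [div_eq_div_iff]
    · ring
    · intro h
      apply hD0
      have h2 : (2 : ℂ) ^ (NA + NB) * ((2 : ℂ) ^ (NA + NB) + 1) = 0 := by
        linear_combination 2 * h
      rcases mul_eq_zero.mp h2 with h3 | h3
      · exact h3
      · exact absurd h3 hD1
    · exact mul_ne_zero hD0 hD1
  · rw [Z2aux.trace_contract_rho, Z2aux.trace_Ms NA NB hA 0, Z2aux.trace_Ms NA NB hA 1,
      Z2aux.trace_contract_Ms NA NB hA 0 b, Z2aux.trace_contract_Ms NA NB hA 1 b]
    have hT : 2⁻¹ * ((2⁻¹ * (2 : ℂ) ^ (NA + NB)) * (2⁻¹ * 2 ^ (NA + NB)) + 2⁻¹ * 2 ^ (NA + NB))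
        = (2 : ℂ) ^ (NA + NB) * ((2 : ℂ) ^ (NA + NB) + 2) / 8 := by ring
    rw [hT]
    have hTne : (2 : ℂ) ^ (NA + NB) * ((2 : ℂ) ^ (NA + NB) + 2) / 8 ≠ 0 := by
      apply div_ne_zero (mul_ne_zero hD0 hD2) (by norm_num)
    field_simp
    ring
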